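/- arXiv:1308.2026 — 2 statements merged into one kernel-verified Lean document; each statement's English description precedes it below -/
import Mathlib

section
/- Let σ₀ = χ_{(0,1)} and u₀ = K_n χ_{(n−1,n)} on Q = (0,n) ⊂ ℝ with K_n = n² log(e+n)^{-3}, n ≥ 2, and Φ(t) = t log(e+t)². Then: ‖u₀‖_{1,Q} = K_n/n, ‖σ₀‖_{1,Q} = 1/n, and there exist absolute constants c₁ ≤ c₂ such that c₁ K_n log(e+n)²/n ≤ ‖u₀‖_{Φ,Q} ≤ c₂ K_n log(e+n)²/n and c₁ log(e+n)²/n ≤ ‖σ₀‖_{Φ,Q} ≤ c₂ log(e+n)²/n. Consequently ‖u₀‖_{1,Q}‖σ₀‖_{Φ,Q} ≈ 1/log(e+n) while ‖u₀‖_{Φ,Q}‖σ₀‖_{Φ,Q} ≈ log(e+n). -/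
open MeasureTheory Real Set Filter

/-- The normalized Luxemburg (Orlicz) norm of `v` over the set `E`:
`inf { λ > 0 : μ(E)⁻¹ ∫_E A(|v|/λ) dμ ≤ 1 }`. -/
noncomputable def luxNorm {X : Type*} [MeasurableSpace X] (μ : Measure X)
    (A : ℝ → ℝ) (E : Set X) (v : X → ℝ) : ℝ :=
  sInf {l : ℝ | 0 < l ∧ ∫⁻ x in E, ENNReal.ofReal (A (|v x| / l)) ∂μ ≤ μ E}

/-- A Young function: continuous, convex, increasing on `[0,∞)`, vanishing at `0`,
with superlinear growth at infinity. -/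
def IsYoung (A : ℝ → ℝ) : Prop :=
  ContinuousOn A (Set.Ici 0) ∧ ConvexOn ℝ (Set.Ici 0) A ∧ MonotoneOn A (Set.Ici 0) ∧
    A 0 = 0 ∧ Filter.Tendsto (fun t => A t / t) Filter.atTop Filter.atTop

private lemma log_sq_le_sqrt {x : ℝ} (hx : 1 ≤ x) : Real.log x ^ 2 ≤ 16 * Real.sqrt x := by
  have h0 : (0:ℝ) ≤ x := by linarith
  have h1 : Real.log x = 4 * Real.log (Real.sqrt (Real.sqrt x)) := by
    rw [Real.log_sqrt (Real.sqrt_nonneg x), Real.log_sqrt h0]; ring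
  have h2 : Real.log (Real.sqrt (Real.sqrt x)) ≤ Real.sqrt (Real.sqrt x) :=
    Real.log_le_self (Real.sqrt_nonneg _)
  have hs1 : 1 ≤ Real.sqrt x := by
    rw [show (1:ℝ) = Real.sqrt 1 by simp]; exact Real.sqrt_le_sqrt hx
  have hs2 : 1 ≤ Real.sqrt (Real.sqrt x) := by
    rw [show (1:ℝ) = Real.sqrt 1 by simp]; exact Real.sqrt_le_sqrt hs1
  have h3 : 0 ≤ Real.log (Real.sqrt (Real.sqrt x)) := Real.log_nonneg hs2
  have h4 : Real.sqrt (Real.sqrt x) ^ 2 = Real.sqrt x := Real.sq_sqrt (Real.sqrt_nonneg x)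
  rw [h1]; nlinarith

private lemma log_e_add_le {N : ℝ} (hN : 2 ≤ N) :
    Real.log (Real.exp 1 + N) ≤ 3 * Real.log N := by
  have he : Real.exp 1 < 3 := by
    have := Real.exp_one_lt_d9; linarith
  have h0 : 0 ≤ N * (N ^ 2 - 4) := mul_nonneg (by linarith) (by nlinarith)
  have h1 : Real.exp 1 + N ≤ N ^ 3 := by nlinarith
  calc Real.log (Real.exp 1 + N) ≤ Real.log (N ^ 3) := by
        gcongr
    _ = 3 * Real.log N := by rw [Real.log_pow]; push_cast; ring

private lemma one_le_L {N : ℝ} (hN : 0 ≤ N) : 1 ≤ Real.log (Real.exp 1 + N) := by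
  calc (1:ℝ) = Real.log (Real.exp 1) := (Real.log_exp 1).symm
    _ ≤ _ := by gcongr; linarith

private lemma memT_lower {N c l : ℝ} (hN : 2 ≤ N) (hc : 0 < c) (hl : 0 < l)
    (h : (c / l) * Real.log (Real.exp 1 + c / l) ^ 2 ≤ N) :
    c * Real.log (Real.exp 1 + N) ^ 2 / (144 * N) ≤ l := by
  set L := Real.log (Real.exp 1 + N) with hL
  have hN0 : (0:ℝ) < N := by linarith
  have hL1 : 1 ≤ L := one_le_L hN0.le
  have hL3 : L ≤ 3 * Real.log N := log_e_add_le hN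
  have hlogN : 0 ≤ Real.log N := Real.log_nonneg (by linarith)
  set t := c / l with ht
  have ht0 : 0 < t := div_pos hc hl
  have hlt : l = c / t := by rw [ht]; field_simp
  have hsN : 0 < Real.sqrt N := Real.sqrt_pos.mpr hN0
  have hsq : Real.sqrt N ^ 2 = N := Real.sq_sqrt hN0.le
  have hms : Real.sqrt N * Real.sqrt N = N := Real.mul_self_sqrt hN0.le
  rcases le_or_gt (Real.sqrt N) t with hcase | hcase
  · have h5 : Real.log (Real.sqrt N) ≤ Real.log (Real.exp 1 + t) := by
      gcongr
      have := Real.exp_pos 1; linarith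
    rw [Real.log_sqrt hN0.le] at h5
    have h7 : L / 6 ≤ Real.log (Real.exp 1 + t) := by linarith
    have h9 : (L/6)^2 ≤ Real.log (Real.exp 1 + t) ^ 2 :=
      pow_le_pow_left₀ (by linarith) h7 2
    have h10 : t * (L/6)^2 ≤ N := by
      calc t * (L/6)^2 ≤ t * Real.log (Real.exp 1 + t) ^ 2 :=
            mul_le_mul_of_nonneg_left h9 ht0.le
        _ ≤ N := h
    rw [hlt, div_le_div_iff₀ (by positivity) ht0]
    nlinarith [mul_le_mul_of_nonneg_left h10 hc.le, mul_nonneg hc.le hN0.le]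
  · have h5 : c / Real.sqrt N ≤ c / t :=
      div_le_div_of_nonneg_left hc.le ht0 hcase.le
    have h6 : L ^ 2 ≤ 144 * Real.sqrt N := by
      have := log_sq_le_sqrt (show (1:ℝ) ≤ N by linarith)
      nlinarith
    rw [hlt]
    calc c * L ^ 2 / (144 * N) ≤ c / Real.sqrt N := by
          rw [div_le_div_iff₀ (by positivity) hsN]
          nlinarith [mul_le_mul_of_nonneg_left (mul_le_mul_of_nonneg_right h6 hsN.le) hc.le]
      _ ≤ c / t := h5

private lemma memT_upper {N : ℝ} (hN : 2 ≤ N) :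
    (N / Real.log (Real.exp 1 + N) ^ 2) *
      Real.log (Real.exp 1 + N / Real.log (Real.exp 1 + N) ^ 2) ^ 2 ≤ N := by
  set L := Real.log (Real.exp 1 + N) with hL
  have hN0 : (0:ℝ) < N := by linarith
  have hL1 : 1 ≤ L := one_le_L hN0.le
  have h1 : N / L ^ 2 ≤ N := div_le_self hN0.le (by nlinarith)
  have h2 : Real.log (Real.exp 1 + N / L ^ 2) ≤ L := by
    rw [hL]; gcongr
  have h3 : 0 ≤ Real.log (Real.exp 1 + N / L ^ 2) := by
    apply Real.log_nonneg
    have he := Real.add_one_le_exp (1:ℝ)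
    have : (0:ℝ) ≤ N / L ^ 2 := by positivity
    linarith
  calc (N / L ^ 2) * Real.log (Real.exp 1 + N / L ^ 2) ^ 2
      ≤ (N / L ^ 2) * L ^ 2 :=
        mul_le_mul_of_nonneg_left (pow_le_pow_left₀ h3 h2 2) (by positivity)
    _ = N := by field_simp

private lemma lux_set_eq {N c a b : ℝ} (hN : 2 ≤ N) (hc : 0 < c)
    (hab : b - a = 1) (hsub : Set.Ioo a b ⊆ Set.Ioo 0 N)
    (Φ v : ℝ → ℝ)
    (hΦ : ∀ t, Φ t = t * Real.log (Real.exp 1 + t) ^ 2)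
    (hv : v = Set.indicator (Set.Ioo a b) (fun _ => c)) :
    {l : ℝ | 0 < l ∧ ∫⁻ x in Set.Ioo 0 N, ENNReal.ofReal (Φ (|v x| / l)) ∂volume
        ≤ volume (Set.Ioo 0 N)}
      = {l : ℝ | 0 < l ∧ Φ (c / l) ≤ N} := by
  ext l
  simp only [Set.mem_setOf_eq, and_congr_right_iff]
  intro hl
  have hpt : (fun x => ENNReal.ofReal (Φ (|v x| / l)))
      = Set.indicator (Set.Ioo a b) (fun _ => ENNReal.ofReal (Φ (c / l))) := by
    funext x
    by_cases hx : x ∈ Set.Ioo a b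
    · simp [hv, hx, abs_of_pos hc]
    · simp [hv, hx, hΦ]
  rw [hpt, lintegral_indicator measurableSet_Ioo, Measure.restrict_restrict measurableSet_Ioo,
    Set.inter_eq_self_of_subset_left hsub, setLIntegral_const, Real.volume_Ioo, Real.volume_Ioo,
    hab, sub_zero, ENNReal.ofReal_one, mul_one]
  exact ENNReal.ofReal_le_ofReal_iff (by linarith)

private lemma lux_bounds {N c a b : ℝ} (hN : 2 ≤ N) (hc : 0 < c)
    (hab : b - a = 1) (hsub : Set.Ioo a b ⊆ Set.Ioo 0 N)
    (Φ v : ℝ → ℝ)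
    (hΦ : ∀ t, Φ t = t * Real.log (Real.exp 1 + t) ^ 2)
    (hv : v = Set.indicator (Set.Ioo a b) (fun _ => c)) :
    c * Real.log (Real.exp 1 + N) ^ 2 / (144 * N) ≤ luxNorm volume Φ (Set.Ioo 0 N) v ∧
    luxNorm volume Φ (Set.Ioo 0 N) v ≤ c * Real.log (Real.exp 1 + N) ^ 2 / N := by
  set L := Real.log (Real.exp 1 + N) with hL
  have hN0 : (0:ℝ) < N := by linarith
  have hL1 : 1 ≤ L := one_le_L hN0.le
  have hLux : luxNorm volume Φ (Set.Ioo 0 N) v = sInf {l : ℝ | 0 < l ∧ Φ (c / l) ≤ N} := by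
    unfold luxNorm
    rw [lux_set_eq hN hc hab hsub Φ v hΦ hv]
  have hmem : c * L ^ 2 / N ∈ {l : ℝ | 0 < l ∧ Φ (c / l) ≤ N} := by
    constructor
    · positivity
    · have hq : c / (c * L ^ 2 / N) = N / L ^ 2 := by
        field_simp
      rw [hq, hΦ]
      exact memT_upper hN
  have hbdd : BddBelow {l : ℝ | 0 < l ∧ Φ (c / l) ≤ N} := ⟨0, fun x hx => hx.1.le⟩
  constructor
  · rw [hLux]
    apply le_csInf ⟨_, hmem⟩
    intro b hb
    exact memT_lower hN hc hb.1 (by rw [← hΦ]; exact hb.2)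
  · rw [hLux]
    exact csInf_le hbdd hmem

private lemma integral_indicator_Ioo {N c a b : ℝ} (hab : b - a = 1)
    (hsub : Set.Ioo a b ⊆ Set.Ioo 0 N) :
    (∫ x in Set.Ioo (0:ℝ) N, Set.indicator (Set.Ioo a b) (fun _ => c) x) = c := by
  rw [MeasureTheory.setIntegral_indicator measurableSet_Ioo,
    Set.inter_eq_self_of_subset_right hsub, setIntegral_const, Real.volume_real_Ioo, hab,
    max_eq_left zero_le_one, one_smul]

/-- Building-block computation: on `Q = (0,n)`, with `u₀ = K_n χ_{(n−1,n)}`,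
`σ₀ = χ_{(0,1)}`, `K_n = n² log(e+n)⁻³`, and `Φ(t) = t log(e+t)²`:
`‖u₀‖_{1,Q} = K_n/n`, `‖σ₀‖_{1,Q} = 1/n`, `‖u₀‖_{Φ,Q} ≈ K_n log(e+n)²/n`,
`‖σ₀‖_{Φ,Q} ≈ log(e+n)²/n`; consequently `‖u₀‖_{1,Q}‖σ₀‖_{Φ,Q} ≈ 1/log(e+n)` and
`‖u₀‖_{Φ,Q}‖σ₀‖_{Φ,Q} ≈ log(e+n)`. -/
theorem building_block_norms :
    ∃ c₁ c₂ : ℝ, 0 < c₁ ∧ c₁ ≤ c₂ ∧ ∀ n : ℕ, 2 ≤ n →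
      ∀ (K : ℝ), K = (n : ℝ) ^ 2 / Real.log (Real.exp 1 + n) ^ 3 →
      ∀ (Φ u₀ σ₀ : ℝ → ℝ),
        (∀ t, Φ t = t * Real.log (Real.exp 1 + t) ^ 2) →
        u₀ = Set.indicator (Set.Ioo ((n : ℝ) - 1) (n : ℝ)) (fun _ => K) →
        σ₀ = Set.indicator (Set.Ioo (0 : ℝ) 1) (fun _ => (1 : ℝ)) →
        ((n : ℝ))⁻¹ * (∫ x in Set.Ioo (0 : ℝ) (n : ℝ), u₀ x) = K / n ∧
        ((n : ℝ))⁻¹ * (∫ x in Set.Ioo (0 : ℝ) (n : ℝ), σ₀ x) = 1 / n ∧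
        (c₁ * (K * Real.log (Real.exp 1 + n) ^ 2 / n) ≤
            luxNorm volume Φ (Set.Ioo (0 : ℝ) (n : ℝ)) u₀ ∧
          luxNorm volume Φ (Set.Ioo (0 : ℝ) (n : ℝ)) u₀ ≤
            c₂ * (K * Real.log (Real.exp 1 + n) ^ 2 / n)) ∧
        (c₁ * (Real.log (Real.exp 1 + n) ^ 2 / n) ≤
            luxNorm volume Φ (Set.Ioo (0 : ℝ) (n : ℝ)) σ₀ ∧
          luxNorm volume Φ (Set.Ioo (0 : ℝ) (n : ℝ)) σ₀ ≤
            c₂ * (Real.log (Real.exp 1 + n) ^ 2 / n)) ∧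
        (c₁ / Real.log (Real.exp 1 + n) ≤
            (K / n) * luxNorm volume Φ (Set.Ioo (0 : ℝ) (n : ℝ)) σ₀ ∧
          (K / n) * luxNorm volume Φ (Set.Ioo (0 : ℝ) (n : ℝ)) σ₀ ≤
            c₂ / Real.log (Real.exp 1 + n)) ∧
        (c₁ * Real.log (Real.exp 1 + n) ≤
            luxNorm volume Φ (Set.Ioo (0 : ℝ) (n : ℝ)) u₀ *
              luxNorm volume Φ (Set.Ioo (0 : ℝ) (n : ℝ)) σ₀ ∧
          luxNorm volume Φ (Set.Ioo (0 : ℝ) (n : ℝ)) u₀ *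
              luxNorm volume Φ (Set.Ioo (0 : ℝ) (n : ℝ)) σ₀ ≤
            c₂ * Real.log (Real.exp 1 + n)) := by
  refine ⟨1/20736, 1, by norm_num, by norm_num, ?_⟩
  intro n hn K hK Φ u₀ σ₀ hΦ hu hσ
  set N : ℝ := (n : ℝ) with hNdef
  have hN : 2 ≤ N := by rw [hNdef]; exact_mod_cast hn
  have hN0 : (0:ℝ) < N := by linarith
  set L := Real.log (Real.exp 1 + N) with hL
  have hL1 : 1 ≤ L := one_le_L hN0.le
  have hL0 : (0:ℝ) < L := by linarith
  have hK0 : 0 < K := by rw [hK]; positivity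
  have hsubσ : Set.Ioo (0:ℝ) 1 ⊆ Set.Ioo 0 N := Set.Ioo_subset_Ioo le_rfl (by linarith)
  have hsubu : Set.Ioo (N - 1) N ⊆ Set.Ioo 0 N := Set.Ioo_subset_Ioo (by linarith) le_rfl
  have habu : N - (N - 1) = 1 := by ring
  have habσ : (1:ℝ) - 0 = 1 := by ring
  obtain ⟨hu1, hu2⟩ := lux_bounds hN hK0 habu hsubu Φ u₀ hΦ hu
  obtain ⟨hσ1, hσ2⟩ := lux_bounds hN (by norm_num : (0:ℝ) < 1) habσ hsubσ Φ σ₀ hΦ hσ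
  rw [one_mul] at hσ1 hσ2
  set Lu := luxNorm volume Φ (Set.Ioo 0 N) u₀ with hLu
  set Lσ := luxNorm volume Φ (Set.Ioo 0 N) σ₀ with hLσ
  have hLu0 : 0 ≤ Lu := le_trans (by positivity) hu1
  have hLσ0 : 0 ≤ Lσ := le_trans (by positivity) hσ1
  refine ⟨?_, ?_, ⟨?_, ?_⟩, ⟨?_, ?_⟩, ⟨?_, ?_⟩, ⟨?_, ?_⟩⟩
  · rw [hu, integral_indicator_Ioo habu hsubu, inv_mul_eq_div]
  · rw [hσ, integral_indicator_Ioo habσ hsubσ, inv_mul_eq_div]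
  · have heq : K * L ^ 2 / (144 * N) = (1/144) * (K * L ^ 2 / N) := by ring
    have hpos : (0:ℝ) ≤ K * L ^ 2 / N := by positivity
    linarith [hu1, heq ▸ hu1]
  · calc Lu ≤ K * L ^ 2 / N := hu2
      _ = 1 * (K * L ^ 2 / N) := by ring
  · have heq : L ^ 2 / (144 * N) = (1/144) * (L ^ 2 / N) := by ring
    have hpos : (0:ℝ) ≤ L ^ 2 / N := by positivity
    linarith [hσ1, heq ▸ hσ1]
  · calc Lσ ≤ L ^ 2 / N := hσ2
      _ = 1 * (L ^ 2 / N) := by ring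
  · have h1 : (K / N) * (L ^ 2 / (144 * N)) = 1 / (144 * L) := by
      rw [hK]; field_simp
    calc (1/20736) / L ≤ 1 / (144 * L) := by
          rw [div_le_div_iff₀ hL0 (by positivity)]; nlinarith
      _ = (K / N) * (L ^ 2 / (144 * N)) := h1.symm
      _ ≤ (K / N) * Lσ := mul_le_mul_of_nonneg_left hσ1 (by positivity)
  · have h2 : (K / N) * (L ^ 2 / N) = 1 / L := by
      rw [hK]; field_simp
    calc (K / N) * Lσ ≤ (K / N) * (L ^ 2 / N) :=
          mul_le_mul_of_nonneg_left hσ2 (by positivity)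
      _ = 1 / L := h2
  · have h3 : (K * L ^ 2 / (144 * N)) * (L ^ 2 / (144 * N)) = (1/20736) * L := by
      rw [hK]; field_simp; ring
    calc (1/20736) * L = (K * L ^ 2 / (144 * N)) * (L ^ 2 / (144 * N)) := h3.symm
      _ ≤ Lu * Lσ := mul_le_mul hu1 hσ1 (by positivity) hLu0
  · have h4 : (K * L ^ 2 / N) * (L ^ 2 / N) = 1 * L := by
      rw [hK]; field_simp
    calc Lu * Lσ ≤ (K * L ^ 2 / N) * (L ^ 2 / N) :=
          mul_le_mul hu2 hσ2 hLσ0 (by positivity)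
      _ = 1 * L := h4
end

section
/- For 1 < p < ∞ and δ > 0, let A(t) = t^p log(e+t)^{p−1+δ}, and for 0 < ε < δ/p let Φ(t) = t log(e+t)^ε and C(t) = t^{p'} log(e+t)^{−1−(p'−1)η} with η = δ − εp. Then there is a constant c₀ = c₀(p, δ, ε) such that A^{-1}(t) C^{-1}(t) ≤ c₀ Φ^{-1}(t) for all t > 0, where F^{-1}(t) = inf{s ≥ 0 : F(s) > t} denotes the generalized inverse. -/
open MeasureTheory Real Set Filter

/-- The generalized inverse `F⁻¹(t) = inf {s ≥ 0 : F(s) > t}`. -/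
noncomputable def geninv (F : ℝ → ℝ) (t : ℝ) : ℝ :=
  sInf {s : ℝ | 0 ≤ s ∧ t < F s}


private lemma one_le_ll {x : ℝ} (hx : 0 ≤ x) : 1 ≤ Real.log (Real.exp 1 + x) := by
  have h := Real.log_le_log (Real.exp_pos 1) (by linarith : Real.exp 1 ≤ Real.exp 1 + x)
  simpa [Real.log_exp] using h

private lemma ll_pos {x : ℝ} (hx : 0 ≤ x) : 0 < Real.log (Real.exp 1 + x) :=
  lt_of_lt_of_le one_pos (one_le_ll hx)

private lemma ll_mono {x y : ℝ} (hx : 0 ≤ x) (hxy : x ≤ y) :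
    Real.log (Real.exp 1 + x) ≤ Real.log (Real.exp 1 + y) :=
  Real.log_le_log (by have := Real.exp_pos 1; linarith) (by linarith)

/-- Eventually, any power of `log (e + x)` is dominated by any positive power of `x`. -/
private lemma evt_ll_rpow_le (r : ℝ) {s : ℝ} (hs : 0 < s) :
    ∀ᶠ x : ℝ in atTop, Real.log (Real.exp 1 + x) ^ r ≤ x ^ s := by
  rcases le_or_gt r 0 with hr | hr
  · filter_upwards [eventually_ge_atTop (1 : ℝ)] with x hx
    have h1 : (1 : ℝ) ≤ Real.log (Real.exp 1 + x) := one_le_ll (by linarith)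
    calc Real.log (Real.exp 1 + x) ^ r ≤ 1 := Real.rpow_le_one_of_one_le_of_nonpos h1 hr
      _ = (1 : ℝ) ^ s := (Real.one_rpow s).symm
      _ ≤ x ^ s := Real.rpow_le_rpow zero_le_one hx hs.le
  · -- main case : 0 < r
    have hlo := (isLittleO_log_rpow_rpow_atTop r (half_pos hs)).def (by positivity :
      (0:ℝ) < (2:ℝ) ^ (-r))
    filter_upwards [hlo, eventually_ge_atTop (Real.exp 1 + 1)] with x hx1 hx3
    have hxe : Real.exp 1 ≤ x := by linarith
    have hx1' : (1:ℝ) ≤ x := le_trans (by nlinarith [Real.add_one_le_exp 1]) hxe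
    have hxpos : (0:ℝ) < x := by linarith
    have hll : Real.log (Real.exp 1 + x) ≤ 2 * Real.log x := by
      have h1 : Real.exp 1 + x ≤ x * x := by nlinarith [Real.exp_one_lt_d9]
      have h2 : Real.log (Real.exp 1 + x) ≤ Real.log (x * x) :=
        Real.log_le_log (by positivity) h1
      rw [Real.log_mul hxpos.ne' hxpos.ne'] at h2
      linarith
    have hlx : (0:ℝ) ≤ Real.log x := Real.log_nonneg hx1'
    have key : Real.log x ^ r ≤ (2:ℝ)^(-r) * x ^ (s/2) := by
      simp only [Real.norm_eq_abs] at hx1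
      rwa [abs_of_nonneg (by positivity), abs_of_nonneg (by positivity)] at hx1
    calc Real.log (Real.exp 1 + x) ^ r ≤ (2 * Real.log x) ^ r :=
          Real.rpow_le_rpow (le_of_lt (ll_pos (by linarith))) hll hr.le
      _ = 2 ^ r * Real.log x ^ r := Real.mul_rpow (by norm_num) hlx
      _ ≤ 2 ^ r * ((2:ℝ)^(-r) * x ^ (s/2)) := by
          apply mul_le_mul_of_nonneg_left key (by positivity)
      _ = x ^ (s/2) := by
          rw [← mul_assoc, ← Real.rpow_add (by norm_num : (0:ℝ) < 2)]
          simp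
      _ ≤ x ^ s := Real.rpow_le_rpow_of_exponent_le hx1' (by linarith)

/-- Uniform lower bound `log(e + t^{1/p} log(e+t)^{-m'}) ≥ c₁ log(e+t)`. -/
private lemma exists_c1 {m' pp : ℝ} (hm' : 0 < m') (hpp : 1 ≤ pp) :
    ∃ c₁ : ℝ, 0 < c₁ ∧ c₁ ≤ 1 ∧ ∀ t : ℝ, 0 < t →
      c₁ * Real.log (Real.exp 1 + t) ≤
        Real.log (Real.exp 1 + t ^ (1/pp) * Real.log (Real.exp 1 + t) ^ (-m')) := by
  have hpp0 : 0 < pp := by linarith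
  obtain ⟨T, hT⟩ := eventually_atTop.mp
    ((evt_ll_rpow_le m' (by positivity : (0:ℝ) < 1/(2*pp))).and (eventually_ge_atTop (3:ℝ)))
  set T' : ℝ := max T 0 with hT'def
  have hT'0 : 0 ≤ T' := le_max_right _ _
  set M : ℝ := Real.log (Real.exp 1 + T') with hMdef
  have hM1 : 1 ≤ M := one_le_ll hT'0
  refine ⟨min (1/(4*pp)) (1/M), by positivity, ?_, ?_⟩
  · exact le_trans (min_le_left _ _) (by rw [div_le_one (by positivity)]; linarith)
  intro t ht
  have hLpos : 0 < Real.log (Real.exp 1 + t) := ll_pos ht.le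
  have ha0 : 0 ≤ t ^ (1/pp) * Real.log (Real.exp 1 + t) ^ (-m') := by positivity
  rcases le_or_gt t T' with hcase | hcase
  · -- small t
    have h1 : Real.log (Real.exp 1 + t) ≤ M := ll_mono ht.le hcase
    have h2 : (1:ℝ) ≤ Real.log (Real.exp 1 + t ^ (1/pp) * Real.log (Real.exp 1 + t) ^ (-m')) :=
      one_le_ll ha0
    calc min (1/(4*pp)) (1/M) * Real.log (Real.exp 1 + t)
        ≤ (1/M) * M := by
          apply mul_le_mul (min_le_right _ _) h1 hLpos.le (by positivity)
      _ = 1 := by field_simp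
      _ ≤ _ := h2
  · -- large t
    have htT : T ≤ t := le_trans (le_max_left _ _) hcase.le
    obtain ⟨h1, h3⟩ := hT t htT
    -- t^{1/pp} * L^{-m'} ≥ t^{1/(2pp)}
    have hLm'pos : 0 < Real.log (Real.exp 1 + t) ^ m' := Real.rpow_pos_of_pos hLpos _
    have hlow : t ^ (1/(2*pp)) ≤ t ^ (1/pp) * Real.log (Real.exp 1 + t) ^ (-m') := by
      have hinv : t ^ (-(1/(2*pp))) ≤ Real.log (Real.exp 1 + t) ^ (-m') := by
        rw [Real.rpow_neg ht.le, Real.rpow_neg hLpos.le]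
        exact inv_anti₀ hLm'pos h1
      calc t ^ (1/(2*pp)) = t ^ (1/pp) * t ^ (-(1/(2*pp))) := by
            rw [← Real.rpow_add ht]; ring_nf
        _ ≤ t ^ (1/pp) * Real.log (Real.exp 1 + t) ^ (-m') := by
            apply mul_le_mul_of_nonneg_left hinv (by positivity)
    have hlog1 : Real.log t ≤ Real.log (Real.exp 1 + t) := Real.log_le_log ht (by
      have := Real.exp_pos 1; linarith)
    have hlogt : 0 < Real.log t := Real.log_pos (by linarith)
    -- log(e+t) ≤ 2 log t
    have hLle : Real.log (Real.exp 1 + t) ≤ 2 * Real.log t := by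
      have h1' : Real.exp 1 + t ≤ t * t := by nlinarith [Real.exp_one_lt_d9]
      have h2' : Real.log (Real.exp 1 + t) ≤ Real.log (t * t) :=
        Real.log_le_log (by positivity) h1'
      rw [Real.log_mul (by linarith) (by linarith)] at h2'
      linarith
    -- log(e + a₀) ≥ (1/(2pp)) log t
    have hmain : (1/(2*pp)) * Real.log t ≤
        Real.log (Real.exp 1 + t ^ (1/pp) * Real.log (Real.exp 1 + t) ^ (-m')) := by
      calc (1/(2*pp)) * Real.log t = Real.log (t ^ (1/(2*pp))) := (Real.log_rpow ht _).symm
        _ ≤ Real.log (Real.exp 1 + t ^ (1/(2*pp))) := Real.log_le_log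
            (Real.rpow_pos_of_pos ht _) (by have := Real.exp_pos 1; linarith)
        _ ≤ _ := ll_mono (by positivity) hlow
    calc min (1/(4*pp)) (1/M) * Real.log (Real.exp 1 + t)
        ≤ (1/(4*pp)) * Real.log (Real.exp 1 + t) := by
          apply mul_le_mul_of_nonneg_right (min_le_left _ _) hLpos.le
      _ ≤ (1/(4*pp)) * (2 * Real.log t) := by
          apply mul_le_mul_of_nonneg_left hLle (by positivity)
      _ = (1/(2*pp)) * Real.log t := by ring
      _ ≤ _ := hmain

/-- There is `K ≥ 1` with `K^q (log(1+K)+1+m)^{-mβ} > 1`. -/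
private lemma exists_K2 {qq mβ : ℝ} (hq : 0 < qq) (hβ : 0 < mβ) {m : ℝ} (hm : 0 ≤ m) :
    ∃ K : ℝ, 1 ≤ K ∧ 1 < K ^ qq * (Real.log (1 + K) + 1 + m) ^ (-mβ) := by
  have F1 := evt_ll_rpow_le mβ (by positivity : (0:ℝ) < qq/4)
  have F2 : ∀ᶠ K : ℝ in atTop, ((2+m : ℝ)) ^ mβ ≤ K ^ (qq/4) :=
    (tendsto_rpow_atTop (by positivity)).eventually_ge_atTop _
  obtain ⟨K, hK⟩ := ((F1.and F2).and (eventually_ge_atTop (2:ℝ))).exists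
  obtain ⟨⟨hK1, hK2⟩, hK3⟩ := hK
  have hK0 : (0:ℝ) < K := by linarith
  have hKL : 0 < Real.log (Real.exp 1 + K) := ll_pos (by linarith)
  set g : ℝ := Real.log (1 + K) + 1 + m with hgdef
  have hg1 : (1:ℝ) ≤ g := by
    have : 0 ≤ Real.log (1 + K) := Real.log_nonneg (by linarith)
    simp only [hgdef]; linarith
  have hgpos : 0 < g := by linarith
  have hgle : g ≤ (2 + m) * Real.log (Real.exp 1 + K) := by
    have h1 : Real.log (1 + K) ≤ Real.log (Real.exp 1 + K) :=
      Real.log_le_log (by linarith) (by have := Real.add_one_le_exp 1; nlinarith)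
    have h2 : (1:ℝ) + m ≤ (1 + m) * Real.log (Real.exp 1 + K) := by
      nlinarith [one_le_ll (by linarith : (0:ℝ) ≤ K)]
    simp only [hgdef]; nlinarith
  have hgpow : g ^ mβ ≤ K ^ (qq/2) := by
    calc g ^ mβ ≤ ((2+m) * Real.log (Real.exp 1 + K)) ^ mβ :=
          Real.rpow_le_rpow hgpos.le hgle hβ.le
      _ = (2+m) ^ mβ * Real.log (Real.exp 1 + K) ^ mβ :=
          Real.mul_rpow (by linarith) hKL.le
      _ ≤ K ^ (qq/4) * K ^ (qq/4) := by
          apply mul_le_mul hK2 hK1 (Real.rpow_nonneg hKL.le _) (by positivity)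
      _ = K ^ (qq/2) := by rw [← Real.rpow_add hK0]; ring_nf
  have h5 : K ^ (-(qq/2)) ≤ g ^ (-mβ) := by
    rw [Real.rpow_neg hK0.le, Real.rpow_neg hgpos.le]
    exact inv_anti₀ (Real.rpow_pos_of_pos hgpos _) hgpow
  have hfin : K ^ (qq/2) ≤ K ^ qq * g ^ (-mβ) := by
    calc K ^ (qq/2) = K ^ qq * K ^ (-(qq/2)) := by rw [← Real.rpow_add hK0]; ring_nf
      _ ≤ K ^ qq * g ^ (-mβ) := mul_le_mul_of_nonneg_left h5 (Real.rpow_nonneg hK0.le _)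
  refine ⟨K, by linarith, lt_of_lt_of_le ?_ hfin⟩
  calc (1:ℝ) = 1 ^ (qq/2) := (Real.one_rpow _).symm
    _ < K ^ (qq/2) := Real.rpow_lt_rpow zero_le_one (by linarith) (by positivity)

set_option maxHeartbeats 2000000 in
/-- The key Young-function inverse factorization: for `A(t) = t^p log(e+t)^{p−1+δ}`,
`Φ(t) = t log(e+t)^ε`, `C(t) = t^{p'} log(e+t)^{−1−(p'−1)η}` with `η = δ − εp` and
`0 < ε < δ/p`, one has `A⁻¹(t) C⁻¹(t) ≤ c₀ Φ⁻¹(t)` for all `t > 0`. -/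
theorem inverse_factorization (p δ ε : ℝ) (hp : 1 < p) (hδ : 0 < δ)
    (hε : 0 < ε) (hεδ : ε < δ / p)
    (A Φ C : ℝ → ℝ)
    (hA : ∀ t : ℝ, 0 ≤ t → A t = t ^ p * Real.log (Real.exp 1 + t) ^ (p - 1 + δ))
    (hΦ : ∀ t : ℝ, 0 ≤ t → Φ t = t * Real.log (Real.exp 1 + t) ^ ε)
    (hC : ∀ t : ℝ, 0 ≤ t → C t =
      t ^ (p / (p - 1)) *
        Real.log (Real.exp 1 + t) ^ (-1 - (p / (p - 1) - 1) * (δ - ε * p))) :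
    ∃ c₀ : ℝ, 0 < c₀ ∧ ∀ t : ℝ, 0 < t →
      geninv A t * geninv C t ≤ c₀ * geninv Φ t := by
  have hp0 : 0 < p := by linarith
  have hp1 : 0 < p - 1 := by linarith
  set q : ℝ := p / (p - 1) with hqdef
  have hq1 : 1 < q := (one_lt_div hp1).mpr (by linarith)
  have hq0 : 0 < q := by linarith
  have hsum : 1/p + 1/q = 1 := by rw [hqdef]; field_simp; ring
  set η : ℝ := δ - ε * p with hηdef
  have hη : 0 < η := by
    have h := (lt_div_iff₀ hp0).mp hεδ
    rw [hηdef]; linarith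
  set α : ℝ := p - 1 + δ with hαdef
  have hα : 0 < α := by rw [hαdef]; linarith
  set m' : ℝ := α / p with hm'def
  have hm'pos : 0 < m' := by positivity
  set m : ℝ := (p - 1 + η) / p with hmdef
  have hmpos : 0 < m := by rw [hmdef]; positivity
  set mβ : ℝ := 1 + (q - 1) * η with hmβdef
  have hmβ : 0 < mβ := by rw [hmβdef]; nlinarith
  have hβeq : -1 - (q - 1) * η = -mβ := by rw [hmβdef]; ring
  have hmq : m * q = mβ := by
    rw [hmdef, hmβdef, hqdef]; field_simp; try ring
  have hm'p : m' * p = α := by rw [hm'def]; field_simp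
  have hmm' : -m' + m = -ε := by
    rw [hm'def, hmdef, hαdef, hηdef]; field_simp; ring
  -- Step 1 : lower bound for geninv Φ
  have hΦlow : ∀ t : ℝ, 0 < t →
      t * Real.log (Real.exp 1 + t) ^ (-ε) ≤ geninv Φ t := by
    intro t ht
    have hLpos := ll_pos ht.le
    have hL1 := one_le_ll ht.le
    have hne : {s : ℝ | 0 ≤ s ∧ t < Φ s}.Nonempty := by
      refine ⟨t + 1, by linarith, ?_⟩
      rw [hΦ (t+1) (by linarith)]
      have h1 : (1:ℝ) ≤ Real.log (Real.exp 1 + (t+1)) ^ ε :=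
        calc (1:ℝ) = 1 ^ ε := (Real.one_rpow ε).symm
          _ ≤ _ := Real.rpow_le_rpow zero_le_one (one_le_ll (by linarith)) hε.le
      nlinarith
    rw [geninv]
    apply le_csInf hne
    rintro s ⟨hs0, hs⟩
    by_contra hcon
    push_neg at hcon
    have hεneg : Real.log (Real.exp 1 + t) ^ (-ε) ≤ 1 :=
      Real.rpow_le_one_of_one_le_of_nonpos hL1 (by linarith)
    have hfle : t * Real.log (Real.exp 1 + t) ^ (-ε) ≤ t := by nlinarith
    have hst : s < t := lt_of_lt_of_le hcon hfle
    have h2 : Φ s ≤ s * Real.log (Real.exp 1 + t) ^ ε := by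
      rw [hΦ s hs0]
      exact mul_le_mul_of_nonneg_left
        (Real.rpow_le_rpow (le_of_lt (ll_pos hs0)) (ll_mono hs0 hst.le) hε.le) hs0
    have h3 : s * Real.log (Real.exp 1 + t) ^ ε <
        (t * Real.log (Real.exp 1 + t) ^ (-ε)) * Real.log (Real.exp 1 + t) ^ ε :=
      mul_lt_mul_of_pos_right hcon (Real.rpow_pos_of_pos hLpos ε)
    have h4 : (t * Real.log (Real.exp 1 + t) ^ (-ε)) * Real.log (Real.exp 1 + t) ^ ε
        = t := by
      rw [mul_assoc, ← Real.rpow_add hLpos]; simp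
    rw [h4] at h3
    linarith
  -- Step 2 : upper bound for geninv A
  obtain ⟨c₁, hc₁0, hc₁1, hc₁⟩ := exists_c1 hm'pos hp.le (m' := m') (pp := p)
  have hc₁α : 0 < c₁ ^ α := Real.rpow_pos_of_pos hc₁0 _
  set K₁ : ℝ := (2 / c₁ ^ α) ^ (1/p) with hK₁def
  have hK₁0 : 0 < K₁ := Real.rpow_pos_of_pos (by positivity) _
  have hK₁p : K₁ ^ p = 2 / c₁ ^ α := by
    rw [hK₁def, ← Real.rpow_mul (by positivity), one_div, inv_mul_cancel₀ hp0.ne',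
      Real.rpow_one]
  have hK₁1 : 1 ≤ K₁ := by
    by_contra h
    push_neg at h
    have h1 := Real.rpow_lt_one hK₁0.le h hp0
    rw [hK₁p] at h1
    have hc₁le : c₁ ^ α ≤ 1 := Real.rpow_le_one hc₁0.le hc₁1 hα.le
    rw [div_lt_one hc₁α] at h1
    linarith
  have hAup : ∀ t : ℝ, 0 < t → geninv A t ≤
      K₁ * (t ^ (1/p) * Real.log (Real.exp 1 + t) ^ (-m')) := by
    intro t ht
    have hLpos := ll_pos ht.le
    have hLα : (0:ℝ) < Real.log (Real.exp 1 + t) ^ α := Real.rpow_pos_of_pos hLpos _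
    set a₀ : ℝ := t ^ (1/p) * Real.log (Real.exp 1 + t) ^ (-m') with ha₀def
    have ha₀pos : 0 < a₀ := by rw [ha₀def]; positivity
    rw [geninv]
    apply csInf_le ⟨0, fun s hs => hs.1⟩
    refine ⟨by positivity, ?_⟩
    rw [hA _ (by positivity)]
    have e1 : (t ^ (1/p)) ^ p = t := by
      rw [← Real.rpow_mul ht.le, one_div, inv_mul_cancel₀ hp0.ne', Real.rpow_one]
    have e2 : (Real.log (Real.exp 1 + t) ^ (-m')) ^ p
        = Real.log (Real.exp 1 + t) ^ (-α) := by
      rw [← Real.rpow_mul hLpos.le, neg_mul, hm'p]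
    have hap : (K₁ * a₀) ^ p
        = K₁ ^ p * (t * Real.log (Real.exp 1 + t) ^ (-α)) := by
      rw [ha₀def, Real.mul_rpow hK₁0.le ha₀pos.le,
        Real.mul_rpow (by positivity) (by positivity), e1, e2]
    have hll : c₁ * Real.log (Real.exp 1 + t) ≤ Real.log (Real.exp 1 + K₁ * a₀) := by
      have hstep : c₁ * Real.log (Real.exp 1 + t) ≤ Real.log (Real.exp 1 + a₀) := by
        rw [ha₀def]; exact hc₁ t ht
      exact le_trans hstep (ll_mono ha₀pos.le (le_mul_of_one_le_left ha₀pos.le hK₁1))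
    have h1 : (c₁ * Real.log (Real.exp 1 + t)) ^ α
        ≤ Real.log (Real.exp 1 + K₁ * a₀) ^ α :=
      Real.rpow_le_rpow (by positivity) hll hα.le
    have h2 : (c₁ * Real.log (Real.exp 1 + t)) ^ α
        = c₁ ^ α * Real.log (Real.exp 1 + t) ^ α := Real.mul_rpow hc₁0.le hLpos.le
    calc t < 2 * t := by linarith
      _ = K₁ ^ p * (t * Real.log (Real.exp 1 + t) ^ (-α))
          * (c₁ ^ α * Real.log (Real.exp 1 + t) ^ α) := by
          rw [hK₁p, Real.rpow_neg hLpos.le]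
          field_simp
      _ ≤ (K₁ * a₀) ^ p * Real.log (Real.exp 1 + K₁ * a₀) ^ α := by
          rw [hap]
          apply mul_le_mul_of_nonneg_left (h2 ▸ h1) (by positivity)
  -- Step 3 : upper bound for geninv C
  obtain ⟨K₂, hK₂1, hK₂⟩ := exists_K2 hq0 hmβ hmpos.le (qq := q) (mβ := mβ) (m := m)
  have hK₂0 : 0 < K₂ := by linarith
  set c₂ : ℝ := Real.log (1 + K₂) + 1 + m with hc₂def
  have hlogK₂ : 0 ≤ Real.log (1 + K₂) := Real.log_nonneg (by linarith)
  have hc₂1 : 1 ≤ c₂ := by rw [hc₂def]; linarith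
  have hc₂0 : 0 < c₂ := by linarith
  have hCup : ∀ t : ℝ, 0 < t → geninv C t ≤
      K₂ * (t ^ (1/q) * Real.log (Real.exp 1 + t) ^ m) := by
    intro t ht
    have hLpos := ll_pos ht.le
    have hL1 := one_le_ll ht.le
    have hEpos := Real.exp_pos 1
    have hE1 : (1:ℝ) ≤ Real.exp 1 := by
      have := Real.add_one_le_exp 1; linarith
    set b₀ : ℝ := t ^ (1/q) * Real.log (Real.exp 1 + t) ^ m with hb₀def
    have hb₀pos : 0 < b₀ := by rw [hb₀def]; positivity
    rw [geninv]
    apply csInf_le ⟨0, fun s hs => hs.1⟩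
    refine ⟨by positivity, ?_⟩
    rw [hC _ (by positivity), hβeq]
    have e1 : (t ^ (1/q)) ^ q = t := by
      rw [← Real.rpow_mul ht.le, one_div, inv_mul_cancel₀ hq0.ne', Real.rpow_one]
    have e2 : (Real.log (Real.exp 1 + t) ^ m) ^ q
        = Real.log (Real.exp 1 + t) ^ mβ := by
      rw [← Real.rpow_mul hLpos.le, hmq]
    have hbq : (K₂ * b₀) ^ q = K₂ ^ q * (t * Real.log (Real.exp 1 + t) ^ mβ) := by
      rw [hb₀def, Real.mul_rpow hK₂0.le hb₀pos.le,
        Real.mul_rpow (by positivity) (by positivity), e1, e2]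
    -- upper bound on log(e + K₂ b₀)
    have h_t1q : t ^ (1/q) ≤ Real.exp 1 + t := by
      rcases le_or_gt t 1 with h | h
      · have := Real.rpow_le_one ht.le h (by positivity : (0:ℝ) ≤ 1/q)
        linarith
      · have h1 : t ^ (1/q) ≤ t ^ (1:ℝ) :=
          Real.rpow_le_rpow_of_exponent_le h.le (by rw [div_le_one hq0]; linarith)
        rw [Real.rpow_one] at h1
        linarith
    have hLle : Real.log (Real.exp 1 + t) ≤ Real.exp 1 + t := by
      have := Real.log_le_sub_one_of_pos (by linarith : (0:ℝ) < Real.exp 1 + t)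
      linarith
    have h_Lm : Real.log (Real.exp 1 + t) ^ m ≤ (Real.exp 1 + t) ^ m :=
      Real.rpow_le_rpow hLpos.le hLle hmpos.le
    have h_b₀ : b₀ ≤ (Real.exp 1 + t) ^ (1 + m) := by
      calc b₀ ≤ (Real.exp 1 + t) * (Real.exp 1 + t) ^ m := by
            rw [hb₀def]
            exact mul_le_mul h_t1q h_Lm (by positivity) (by positivity)
        _ = (Real.exp 1 + t) ^ (1 + m) := by
            rw [Real.rpow_add (by linarith), Real.rpow_one]
    have hXe : Real.exp 1 ≤ (Real.exp 1 + t) ^ (1 + m) := by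
      have h1 : (Real.exp 1 + t) ^ (1:ℝ) ≤ (Real.exp 1 + t) ^ (1 + m) :=
        Real.rpow_le_rpow_of_exponent_le (by linarith) (by linarith)
      rw [Real.rpow_one] at h1
      linarith
    have hX : Real.exp 1 + K₂ * b₀ ≤ (1 + K₂) * (Real.exp 1 + t) ^ (1 + m) := by
      have h1 : K₂ * b₀ ≤ K₂ * (Real.exp 1 + t) ^ (1 + m) :=
        mul_le_mul_of_nonneg_left h_b₀ hK₂0.le
      calc Real.exp 1 + K₂ * b₀
          ≤ (Real.exp 1 + t) ^ (1 + m) + K₂ * (Real.exp 1 + t) ^ (1 + m) :=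
            add_le_add hXe h1
        _ = (1 + K₂) * (Real.exp 1 + t) ^ (1 + m) := by ring
    have hllb : Real.log (Real.exp 1 + K₂ * b₀) ≤ c₂ * Real.log (Real.exp 1 + t) := by
      have h1 : Real.log (Real.exp 1 + K₂ * b₀)
          ≤ Real.log ((1 + K₂) * (Real.exp 1 + t) ^ (1 + m)) :=
        Real.log_le_log (by positivity) hX
      rw [Real.log_mul (by positivity) (by positivity),
        Real.log_rpow (by linarith)] at h1
      have h2 : Real.log (1 + K₂) ≤ Real.log (1 + K₂) * Real.log (Real.exp 1 + t) := by
        have := mul_le_mul_of_nonneg_left hL1 hlogK₂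
        simpa using this
      rw [hc₂def]
      calc Real.log (Real.exp 1 + K₂ * b₀)
          ≤ Real.log (1 + K₂) + (1 + m) * Real.log (Real.exp 1 + t) := h1
        _ ≤ Real.log (1 + K₂) * Real.log (Real.exp 1 + t)
            + (1 + m) * Real.log (Real.exp 1 + t) := by linarith
        _ = (Real.log (1 + K₂) + 1 + m) * Real.log (Real.exp 1 + t) := by ring
    have hbpos : 0 < Real.log (Real.exp 1 + K₂ * b₀) := ll_pos (by positivity)
    have hbneg : (c₂ * Real.log (Real.exp 1 + t)) ^ (-mβ)
        ≤ Real.log (Real.exp 1 + K₂ * b₀) ^ (-mβ) := by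
      rw [Real.rpow_neg (by positivity), Real.rpow_neg hbpos.le]
      exact inv_anti₀ (Real.rpow_pos_of_pos hbpos _)
        (Real.rpow_le_rpow hbpos.le hllb hmβ.le)
    have hsplit : (c₂ * Real.log (Real.exp 1 + t)) ^ (-mβ)
        = c₂ ^ (-mβ) * Real.log (Real.exp 1 + t) ^ (-mβ) :=
      Real.mul_rpow hc₂0.le hLpos.le
    have hLmβ : (0:ℝ) < Real.log (Real.exp 1 + t) ^ mβ := Real.rpow_pos_of_pos hLpos _
    calc t = 1 * t := (one_mul t).symm
      _ < (K₂ ^ q * c₂ ^ (-mβ)) * t := mul_lt_mul_of_pos_right hK₂ ht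
      _ = K₂ ^ q * (t * Real.log (Real.exp 1 + t) ^ mβ)
          * (c₂ ^ (-mβ) * Real.log (Real.exp 1 + t) ^ (-mβ)) := by
          have hLL : Real.log (Real.exp 1 + t) ^ mβ * Real.log (Real.exp 1 + t) ^ (-mβ)
              = 1 := by rw [← Real.rpow_add hLpos]; simp
          calc (K₂ ^ q * c₂ ^ (-mβ)) * t
              = K₂ ^ q * c₂ ^ (-mβ) * t
                * (Real.log (Real.exp 1 + t) ^ mβ * Real.log (Real.exp 1 + t) ^ (-mβ)) := by
                rw [hLL, mul_one]
            _ = K₂ ^ q * (t * Real.log (Real.exp 1 + t) ^ mβ)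
                * (c₂ ^ (-mβ) * Real.log (Real.exp 1 + t) ^ (-mβ)) := by ring
      _ ≤ (K₂ * b₀) ^ q * Real.log (Real.exp 1 + K₂ * b₀) ^ (-mβ) := by
          rw [hbq]
          exact mul_le_mul_of_nonneg_left (hsplit ▸ hbneg) (by positivity)
  -- Final assembly
  refine ⟨K₁ * K₂, by positivity, fun t ht => ?_⟩
  have hLpos := ll_pos ht.le
  have g0A : 0 ≤ geninv A t := Real.sInf_nonneg (fun s hs => hs.1)
  have g0C : 0 ≤ geninv C t := Real.sInf_nonneg (fun s hs => hs.1)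
  have hprod : geninv A t * geninv C t ≤
      (K₁ * (t ^ (1/p) * Real.log (Real.exp 1 + t) ^ (-m')))
        * (K₂ * (t ^ (1/q) * Real.log (Real.exp 1 + t) ^ m)) :=
    mul_le_mul (hAup t ht) (hCup t ht) g0C (by positivity)
  have e1 : t ^ (1/p) * t ^ (1/q) = t := by
    rw [← Real.rpow_add ht, hsum, Real.rpow_one]
  have e2 : Real.log (Real.exp 1 + t) ^ (-m') * Real.log (Real.exp 1 + t) ^ m
      = Real.log (Real.exp 1 + t) ^ (-ε) := by
    rw [← Real.rpow_add hLpos, hmm']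
  have halg : (K₁ * (t ^ (1/p) * Real.log (Real.exp 1 + t) ^ (-m')))
        * (K₂ * (t ^ (1/q) * Real.log (Real.exp 1 + t) ^ m))
      = (K₁ * K₂) * (t * Real.log (Real.exp 1 + t) ^ (-ε)) := by
    rw [show (K₁ * (t ^ (1/p) * Real.log (Real.exp 1 + t) ^ (-m')))
        * (K₂ * (t ^ (1/q) * Real.log (Real.exp 1 + t) ^ m))
        = (K₁ * K₂) * ((t ^ (1/p) * t ^ (1/q))
          * (Real.log (Real.exp 1 + t) ^ (-m') * Real.log (Real.exp 1 + t) ^ m))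
        from by ring, e1, e2]
  rw [halg] at hprod
  calc geninv A t * geninv C t
      ≤ (K₁ * K₂) * (t * Real.log (Real.exp 1 + t) ^ (-ε)) := hprod
    _ ≤ (K₁ * K₂) * geninv Φ t :=
        mul_le_mul_of_nonneg_left (hΦlow t ht) (by positivity)
end
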